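/- In QHC, the modality ∇ defined by ∇α := !?α satisfies the lax-modality (QH4) laws: ⊢ α → ∇α, ⊢ ∇∇α → ∇α, ⊢ ∇(α→β) → (∇α → ∇β), and ⊢ ∇⊥ → ⊥. -/
import Mathlib


/- Problem (intuitionistic) formulas and proposition (classical) formulas of QHC. -/
mutual
inductive PF : Type
  | var : Nat → PF
  | bot : PF
  | and : PF → PF → PF
  | or : PF → PF → PF
  | imp : PF → PF → PF
  | bang : CF → PF
inductive CF : Type
  | var : Nat → CF
  | fls : CF
  | and : CF → CF → CF
  | or : CF → CF → CF
  | imp : CF → CF → CF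
  | quest : PF → CF
end

def PF.neg (α : PF) : PF := α.imp PF.bot
def CF.neg (p : CF) : CF := p.imp CF.fls
def PF.iff (α β : PF) : PF := (α.imp β).and (β.imp α)
def CF.iff (p q : CF) : CF := (p.imp q).and (q.imp p)
def CF.box (p : CF) : CF := CF.quest (PF.bang p)
def PF.nabla (α : PF) : PF := PF.bang (CF.quest α)

/- Derivability in QHC, parameterized by a set `Ax` of extra problem axioms
(used to treat the axiom ¬!0 and its variants uniformly). Intuitionistic logic
on problems, classical logic on propositions, the rules α ⊢ ?α and p ⊢ !p, and
the mixed axioms ?!p → p, α → !?α, !(p→q) → (!p → !q), ?(α→β) → (?α → ?β). -/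
mutual
inductive ProvP (Ax : PF → Prop) : PF → Prop
  | axm {α} : Ax α → ProvP Ax α
  | mp {α β} : ProvP Ax (α.imp β) → ProvP Ax α → ProvP Ax β
  | ak (α β : PF) : ProvP Ax (α.imp (β.imp α))
  | as (α β γ : PF) : ProvP Ax ((α.imp (β.imp γ)).imp ((α.imp β).imp (α.imp γ)))
  | andI (α β : PF) : ProvP Ax (α.imp (β.imp (α.and β)))
  | andE1 (α β : PF) : ProvP Ax ((α.and β).imp α)
  | andE2 (α β : PF) : ProvP Ax ((α.and β).imp β)
  | orI1 (α β : PF) : ProvP Ax (α.imp (α.or β))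
  | orI2 (α β : PF) : ProvP Ax (β.imp (α.or β))
  | orE (α β γ : PF) : ProvP Ax ((α.imp γ).imp ((β.imp γ).imp ((α.or β).imp γ)))
  | exf (α : PF) : ProvP Ax (PF.bot.imp α)
  | bangIntro {p} : ProvC Ax p → ProvP Ax (PF.bang p)
  | bangImp (p q : CF) : ProvP Ax ((PF.bang (p.imp q)).imp ((PF.bang p).imp (PF.bang q)))
  | bangQuest (α : PF) : ProvP Ax (α.imp (PF.bang (CF.quest α)))
inductive ProvC (Ax : PF → Prop) : CF → Prop
  | mp {p q} : ProvC Ax (p.imp q) → ProvC Ax p → ProvC Ax q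
  | ak (p q : CF) : ProvC Ax (p.imp (q.imp p))
  | as (p q r : CF) : ProvC Ax ((p.imp (q.imp r)).imp ((p.imp q).imp (p.imp r)))
  | andI (p q : CF) : ProvC Ax (p.imp (q.imp (p.and q)))
  | andE1 (p q : CF) : ProvC Ax ((p.and q).imp p)
  | andE2 (p q : CF) : ProvC Ax ((p.and q).imp q)
  | orI1 (p q : CF) : ProvC Ax (p.imp (p.or q))
  | orI2 (p q : CF) : ProvC Ax (q.imp (p.or q))
  | orE (p q r : CF) : ProvC Ax ((p.imp r).imp ((q.imp r).imp ((p.or q).imp r)))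
  | exf (p : CF) : ProvC Ax (CF.fls.imp p)
  | lem (p : CF) : ProvC Ax (p.or (p.imp CF.fls))
  | questIntro {α} : ProvP Ax α → ProvC Ax (CF.quest α)
  | questImp (α β : PF) : ProvC Ax ((CF.quest (α.imp β)).imp ((CF.quest α).imp (CF.quest β)))
  | questBang (p : CF) : ProvC Ax ((CF.quest (PF.bang p)).imp p)
end

/-- The axiom (!⊥): ¬!0. -/
def QHCAx : PF → Prop := fun α => α = (PF.bang CF.fls).imp PF.bot

/-- Derivability of a problem in QHC. -/
def PrvP (α : PF) : Prop := ProvP QHCAx α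
/-- Derivability of a proposition in QHC. -/
def PrvC (p : CF) : Prop := ProvC QHCAx p

theorem ProvP.trans {Ax} {a b c : PF} (hab : ProvP Ax (a.imp b))
    (hbc : ProvP Ax (b.imp c)) : ProvP Ax (a.imp c) :=
  ProvP.mp (ProvP.mp (ProvP.as a b c)
    (ProvP.mp (ProvP.ak (b.imp c) a) hbc)) hab

theorem ProvC.trans {Ax} {a b c : CF} (hab : ProvC Ax (a.imp b))
    (hbc : ProvC Ax (b.imp c)) : ProvC Ax (a.imp c) :=
  ProvC.mp (ProvC.mp (ProvC.as a b c)
    (ProvC.mp (ProvC.ak (b.imp c) a) hbc)) hab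

theorem qhc_nabla_lax :
    (∀ α : PF, PrvP (α.imp (PF.nabla α))) ∧
    (∀ α : PF, PrvP ((PF.nabla (PF.nabla α)).imp (PF.nabla α))) ∧
    (∀ α β : PF, PrvP ((PF.nabla (α.imp β)).imp ((PF.nabla α).imp (PF.nabla β)))) ∧
    PrvP ((PF.nabla PF.bot).imp PF.bot) := by
  refine ⟨fun α => ProvP.bangQuest α, fun α => ?_, fun α β => ?_, ?_⟩
  · -- ∇∇α → ∇α : from ?!?α → ?α (questBang), bangIntro + bangImp
    exact ProvP.mp (ProvP.bangImp _ _)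
      (ProvP.bangIntro (ProvC.questBang (CF.quest α)))
  · -- ∇(α→β) → (∇α → ∇β)
    have h1 : PrvP ((PF.bang (CF.quest (α.imp β))).imp
        (PF.bang ((CF.quest α).imp (CF.quest β)))) :=
      ProvP.mp (ProvP.bangImp _ _) (ProvP.bangIntro (ProvC.questImp α β))
    exact ProvP.trans h1 (ProvP.bangImp (CF.quest α) (CF.quest β))
  · -- ∇⊥ → ⊥
    have h1 : ProvC QHCAx ((CF.quest PF.bot).imp CF.fls) :=
      ProvC.trans
        (ProvC.mp (ProvC.questImp PF.bot (PF.bang CF.fls))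
          (ProvC.questIntro (ProvP.exf (PF.bang CF.fls))))
        (ProvC.questBang CF.fls)
    have h2 : PrvP ((PF.bang (CF.quest PF.bot)).imp (PF.bang CF.fls)) :=
      ProvP.mp (ProvP.bangImp _ _) (ProvP.bangIntro h1)
    exact ProvP.trans h2 (ProvP.axm rfl)
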